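/- Let R₁(x) = ((π² + x²)/x²)·((π² + x²)² + Qπ²) for x > 0 and Q ≥ 0. Then R₁ is strictly convex on (0, ∞) and has a unique global minimizer x_r > 0. -/

import Mathlib

open Real

private lemma strictConvexOn_congr' {s : Set ℝ} {f g : ℝ → ℝ}
    (h : ∀ x ∈ s, f x = g x) (hg : StrictConvexOn ℝ s g) : StrictConvexOn ℝ s f := by
  refine ⟨hg.1, fun x hx y hy hxy a b ha hb hab => ?_⟩
  rw [h x hx, h y hy, h _ (hg.1 hx hy ha.le hb.le hab)]
  exact hg.2 hx hy hxy ha hb hab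

theorem stmt_0 (Q : ℝ) (hQ : 0 ≤ Q) :
    StrictConvexOn ℝ (Set.Ioi (0:ℝ))
      (fun x => ((π^2 + x^2)/x^2) * ((π^2 + x^2)^2 + Q*π^2)) ∧
    ∃! xr : ℝ, xr ∈ Set.Ioi (0:ℝ) ∧
      ∀ y ∈ Set.Ioi (0:ℝ),
        ((π^2 + xr^2)/xr^2) * ((π^2 + xr^2)^2 + Q*π^2)
          ≤ ((π^2 + y^2)/y^2) * ((π^2 + y^2)^2 + Q*π^2) := by
  have hπ : (0:ℝ) < π := Real.pi_pos
  have hπ3 : (3:ℝ) < π := Real.pi_gt_three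
  set f : ℝ → ℝ := fun x => ((π^2 + x^2)/x^2) * ((π^2 + x^2)^2 + Q*π^2) with hf
  set A : ℝ := π^6 + Q*π^4 with hA
  have hApos : 0 < A := by positivity
  set C : ℝ := 3*π^4 + Q*π^2 with hC
  set g : ℝ → ℝ := fun x => A * x^(-2:ℤ) + 3*π^2*x^2 + x^4 + C with hgdef
  have hzpow : ∀ x : ℝ, x ≠ 0 → x^(-2:ℤ) = (x^2)⁻¹ := by
    intro x hx; rw [zpow_neg]; norm_cast
  have heq : ∀ x ∈ Set.Ioi (0:ℝ), f x = g x := by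
    intro x hx
    have hx0 : x ≠ 0 := ne_of_gt hx
    simp only [hf, hgdef, hzpow x hx0]
    field_simp
    ring
  -- derivatives of g
  set g1 : ℝ → ℝ := fun x => A * ((-2:ℝ) * x^(-3:ℤ)) + 3*π^2*(2*x) + 4*x^3 with hg1def
  set g2 : ℝ → ℝ := fun x => A * ((-2:ℝ) * ((-3:ℝ) * x^(-4:ℤ))) + 6*π^2 + 12*x^2 with hg2def
  have hd1 : ∀ x : ℝ, x ≠ 0 → HasDerivAt g (g1 x) x := by
    intro x hx
    have h1 := (hasDerivAt_zpow (-2) x (Or.inl hx)).const_mul A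
    have h2 := (hasDerivAt_pow 2 x).const_mul (3*π^2)
    have h3 := hasDerivAt_pow 4 x
    have := ((h1.add h2).add h3).add_const C
    refine HasDerivAt.congr_deriv this ?_
    simp only [hg1def]
    push_cast
    ring
  have hd2 : ∀ x : ℝ, x ≠ 0 → HasDerivAt g1 (g2 x) x := by
    intro x hx
    have h1 := ((hasDerivAt_zpow (-3) x (Or.inl hx)).const_mul (-2:ℝ)).const_mul A
    have h2 := ((hasDerivAt_id x).const_mul (2:ℝ)).const_mul (3*π^2)
    have h3 := (hasDerivAt_pow 3 x).const_mul (4:ℝ)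
    have := (h1.add h2).add h3
    refine HasDerivAt.congr_deriv this ?_
    simp only [hg2def]
    push_cast
    ring
  have hcontg : ContinuousOn g (Set.Ioi 0) :=
    fun x hx => ((hd1 x (ne_of_gt hx)).differentiableAt.continuousAt).continuousWithinAt
  have hconvg : StrictConvexOn ℝ (Set.Ioi (0:ℝ)) g := by
    apply strictConvexOn_of_deriv2_pos (convex_Ioi 0) hcontg
    intro x hx
    rw [interior_Ioi] at hx
    have hx0 : x ≠ 0 := ne_of_gt hx
    have hdg : deriv g =ᶠ[nhds x] g1 := by
      filter_upwards [isOpen_compl_singleton.mem_nhds hx0] with y hy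
      exact (hd1 y hy).deriv
    have : deriv^[2] g x = g2 x := by
      simp only [Function.iterate_succ, Function.iterate_zero, Function.comp_apply, id_eq]
      rw [Filter.EventuallyEq.deriv_eq hdg]
      exact (hd2 x hx0).deriv
    rw [this]
    have h4 : (0:ℝ) < x^(-4:ℤ) := zpow_pos hx _
    simp only [hg2def]
    nlinarith [sq_nonneg x, mul_pos hApos h4]
  have hconvf : StrictConvexOn ℝ (Set.Ioi (0:ℝ)) f := strictConvexOn_congr' heq hconvg
  refine ⟨hconvf, ?_⟩
  -- existence of minimizer
  set M : ℝ := f π with hM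
  have hMg : M = g π := heq π (by simpa using hπ)
  have hπz : (0:ℝ) < π^(-2:ℤ) := zpow_pos hπ _
  have hM3 : 3*π^4 ≤ M := by
    rw [hMg]; simp only [hgdef, hC]
    nlinarith [mul_pos hApos hπz, sq_nonneg π]
  have hπ1 : (1:ℝ) ≤ π := by linarith
  have hππ4 : π ≤ π^4 := by nlinarith [sq_nonneg (π^2 - 1), mul_nonneg (sub_nonneg.mpr hπ1) hπ.le]
  have hπM : π ≤ M := by nlinarith [sq_nonneg π]
  have hM1 : (1:ℝ) < M := by nlinarith
  set a : ℝ := min π (Real.sqrt (A/(M+1))) with ha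
  have ha0 : 0 < a := lt_min hπ (Real.sqrt_pos.mpr (by positivity))
  have hπK : π ∈ Set.Icc a M := ⟨min_le_left _ _, hπM⟩
  have hKsub : Set.Icc a M ⊆ Set.Ioi (0:ℝ) := fun z hz => lt_of_lt_of_le ha0 hz.1
  have hcontf : ContinuousOn f (Set.Icc a M) :=
    (hcontg.mono hKsub).congr fun z hz => heq z (hKsub hz)
  obtain ⟨xr, hxrK, hmin⟩ := (isCompact_Icc).exists_isMinOn ⟨π, hπK⟩ hcontf
  have hxr0 : xr ∈ Set.Ioi (0:ℝ) := hKsub hxrK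
  have hxrM : f xr ≤ M := hmin hπK
  have hglobal : ∀ y ∈ Set.Ioi (0:ℝ), f xr ≤ f y := by
    intro y hy
    by_cases hyK : y ∈ Set.Icc a M
    · exact hmin hyK
    · have hy0 : (0:ℝ) < y := hy
      have hgy : f y = g y := heq y hy
      have hC0 : (0:ℝ) ≤ C := by positivity
      have ht1 : (0:ℝ) ≤ 3*π^2*y^2 := by positivity
      have ht2 : (0:ℝ) ≤ y^4 := by positivity
      rcases lt_or_ge y a with hya | hya
      · -- y < a
        have hys : y < Real.sqrt (A/(M+1)) := lt_of_lt_of_le hya (min_le_right _ _)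
        have hy2 : y^2 < A/(M+1) := (Real.lt_sqrt hy0.le).mp hys
        have hy2' : y^2 * (M+1) < A := by
          rw [lt_div_iff₀ (by linarith)] at hy2; linarith
        have hAy : M + 1 ≤ A / y^2 := by
          rw [le_div_iff₀ (by positivity)]; nlinarith
        have hgy2 : M + 1 ≤ g y := by
          simp only [hgdef, hzpow y (ne_of_gt hy0)]
          have hd : A * (y^2)⁻¹ = A / y^2 := by ring
          linarith [hd ▸ hAy]
        linarith [hxrM, hgy ▸ hgy2]
      · -- M < y
        have hyM : M < y := lt_of_not_ge (fun hle => hyK ⟨hya, hle⟩)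
        have hy1 : (1:ℝ) ≤ y := by linarith
        have hy4 : y ≤ y^4 := by
          nlinarith [sq_nonneg (y^2 - 1), mul_nonneg (sub_nonneg.mpr hy1) hy0.le]
        have hgy2 : M < g y := by
          simp only [hgdef]
          have h4 : (0:ℝ) ≤ A * y^(-2:ℤ) := le_of_lt (mul_pos hApos (zpow_pos hy0 _))
          linarith
        linarith [hxrM, hgy ▸ hgy2]
  refine ⟨xr, ⟨hxr0, hglobal⟩, ?_⟩
  rintro y ⟨hy0, hymin⟩
  exact hconvf.eq_of_isMinOn (isMinOn_iff.mpr hymin) (isMinOn_iff.mpr hglobal) hy0 hxr0
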